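/- For 0 < α < 1 and t > 0, the integral I₁(t) = ∫₀^∞ (e^{itx} − 1 − itx/(1+x²)) x^{−(α+1)} dx equals i c t − t^α e^{−iπα/2} Γ(1−α)/α for some real constant c depending only on α. -/

import Mathlib

open MeasureTheory Set Complex Real Filter Topology

namespace LevyAux


lemma norm_cexp_sub_one_le {w : ℂ} (hw : w.re ≤ 0) :
    ‖Complex.exp w - 1‖ ≤ min 2 (2 * ‖w‖) := by
  have h2 : ‖Complex.exp w - 1‖ ≤ 2 := by
    calc ‖Complex.exp w - 1‖ ≤ ‖Complex.exp w‖ + ‖(1 : ℂ)‖ := norm_sub_le _ _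
    _ ≤ 1 + 1 := by
        rw [norm_one, Complex.norm_exp]
        gcongr
        exact Real.exp_le_one_iff.mpr hw
    _ = 2 := by norm_num
  rcases le_or_gt ‖w‖ 1 with h | h
  · exact le_min h2 (Complex.norm_exp_sub_one_le h)
  · refine le_min h2 (h2.trans ?_)
    nlinarith

lemma contOn_dom {α C : ℝ} : ContinuousOn (fun x : ℝ => min 2 (C * x) * x ^ (-(α + 1))) (Ioi (0:ℝ)) := by
  apply ContinuousOn.mul
  · exact (continuous_const.min (continuous_const.mul continuous_id)).continuousOn
  · intro x hx
    exact (Real.continuousAt_rpow_const x _ (Or.inl (ne_of_gt hx))).continuousWithinAt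

lemma integrableOn_min_dom {α : ℝ} (hα₀ : 0 < α) (hα₁ : α < 1) {C : ℝ} (hC : 0 ≤ C) :
    IntegrableOn (fun x : ℝ => min 2 (C * x) * x ^ (-(α + 1))) (Ioi (0 : ℝ)) := by
  rw [← Ioc_union_Ioi_eq_Ioi (zero_le_one : (0:ℝ) ≤ 1)]
  apply IntegrableOn.union
  · -- on Ioc 0 1, bounded by C * x ^ (-α)
    have hint : IntegrableOn (fun x : ℝ => C * x ^ (-α)) (Ioc (0:ℝ) 1) := by
      apply Integrable.const_mul
      have := intervalIntegral.intervalIntegrable_rpow' (a := 0) (b := 1) (by linarith : (-1:ℝ) < -α)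
      exact (intervalIntegrable_iff_integrableOn_Ioc_of_le zero_le_one).1 this
    apply Integrable.mono' hint
    · exact (contOn_dom.mono Ioc_subset_Ioi_self).aestronglyMeasurable measurableSet_Ioc
    · filter_upwards [ae_restrict_mem measurableSet_Ioc] with x hx
      have hx0 : 0 < x := hx.1
      have h1 : |min 2 (C * x) * x ^ (-(α + 1))| ≤ (C * x) * x ^ (-(α+1)) := by
        rw [abs_mul, _root_.abs_of_nonneg (Real.rpow_nonneg hx0.le _)]
        apply mul_le_mul_of_nonneg_right _ (Real.rpow_nonneg hx0.le _)
        rcases min_cases 2 (C * x) with ⟨h, hle⟩ | ⟨h, hle⟩ <;>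
          rw [h, _root_.abs_of_nonneg (by positivity)] <;> linarith
      refine h1.trans (le_of_eq ?_)
      rw [mul_assoc]
      congr 1
      rw [← Real.rpow_one_add' hx0.le (by intro h; linarith : (1 + -(α+1)) ≠ 0)]
      norm_num
  · -- on Ioi 1, bounded by 2 * x ^ (-(α+1))
    have hint : IntegrableOn (fun x : ℝ => 2 * x ^ (-(α+1))) (Ioi (1:ℝ)) :=
      (integrableOn_Ioi_rpow_of_lt (by linarith) zero_lt_one).const_mul 2
    apply Integrable.mono' hint
    · exact (contOn_dom.mono (Ioi_subset_Ioi zero_le_one)).aestronglyMeasurable measurableSet_Ioi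
    · filter_upwards [ae_restrict_mem measurableSet_Ioi] with x hx
      have hx0 : (0:ℝ) < x := lt_trans zero_lt_one hx
      rw [Real.norm_eq_abs, abs_mul, _root_.abs_of_nonneg (Real.rpow_nonneg hx0.le _)]
      apply mul_le_mul_of_nonneg_right _ (Real.rpow_nonneg hx0.le _)
      rcases min_cases 2 (C * x) with ⟨h, hle⟩ | ⟨h, hle⟩ <;>
        rw [h, _root_.abs_of_nonneg (by positivity)] <;> linarith

lemma integrableOn_kernel {α : ℝ} (hα₀ : 0 < α) (hα₁ : α < 1) (l : ℂ) (hl : l.re ≤ 0) :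
    IntegrableOn (fun x : ℝ =>
      (Complex.exp (l * x) - 1) * ((x ^ (-(α + 1)) : ℝ) : ℂ)) (Ioi (0:ℝ)) := by
  apply Integrable.mono' ((integrableOn_min_dom hα₀ hα₁ (by positivity : (0:ℝ) ≤ 2 * ‖l‖)))
  · apply ContinuousOn.aestronglyMeasurable _ measurableSet_Ioi
    exact ((Complex.continuous_exp.comp (continuous_const.mul Complex.continuous_ofReal)).sub
      continuous_const).continuousOn.mul (by
        intro x hx
        exact (Complex.continuous_ofReal.comp_continuousOn (fun y hy =>
          (Real.continuousAt_rpow_const y _ (Or.inl (ne_of_gt hy))).continuousWithinAt)) x hx)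
  · filter_upwards [ae_restrict_mem measurableSet_Ioi] with x hx
    have hx0 : (0:ℝ) < x := hx
    rw [norm_mul, Complex.norm_real, Real.norm_eq_abs, _root_.abs_of_nonneg (Real.rpow_nonneg hx0.le _)]
    apply mul_le_mul_of_nonneg_right _ (Real.rpow_nonneg hx0.le _)
    have hre : (l * x).re ≤ 0 := by
      simp only [Complex.mul_re, Complex.ofReal_re, Complex.ofReal_im, mul_zero, sub_zero]
      exact mul_nonpos_of_nonpos_of_nonneg hl hx0.le
    refine (norm_cexp_sub_one_le hre).trans (le_of_eq ?_)
    rw [norm_mul, Complex.norm_real, Real.norm_eq_abs, _root_.abs_of_nonneg hx0.le, mul_assoc]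



lemma aesm_kernel (α : ℝ) (l : ℂ) :
    AEStronglyMeasurable (fun x : ℝ =>
      (Complex.exp (l * x) - 1) * ((x ^ (-(α + 1)) : ℝ) : ℂ)) (volume.restrict (Ioi 0)) := by
  apply ContinuousOn.aestronglyMeasurable _ measurableSet_Ioi
  exact ((Complex.continuous_exp.comp (continuous_const.mul Complex.continuous_ofReal)).sub
    continuous_const).continuousOn.mul (Complex.continuous_ofReal.comp_continuousOn
      (fun y hy => (Real.continuousAt_rpow_const y _ (Or.inl (ne_of_gt hy))).continuousWithinAt))

lemma aesm_kernel' (α : ℝ) (l : ℂ) :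
    AEStronglyMeasurable (fun x : ℝ =>
      (Complex.exp (l * x) * x) * ((x ^ (-(α + 1)) : ℝ) : ℂ)) (volume.restrict (Ioi 0)) := by
  apply ContinuousOn.aestronglyMeasurable _ measurableSet_Ioi
  exact ((Complex.continuous_exp.comp (continuous_const.mul Complex.continuous_ofReal)).mul
    Complex.continuous_ofReal).continuousOn.mul (Complex.continuous_ofReal.comp_continuousOn
      (fun y hy => (Real.continuousAt_rpow_const y _ (Or.inl (ne_of_gt hy))).continuousWithinAt))

lemma integrableOn_exp_rpow {α b : ℝ} (hα₁ : α < 1) (hb : 0 < b) :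
    IntegrableOn (fun x : ℝ => Real.exp (-b * x) * x ^ (-α)) (Ioi (0:ℝ)) := by
  have h := integrableOn_rpow_mul_exp_neg_mul_rpow (s := -α) (p := 1) (b := b)
    (by linarith) zero_lt_one hb
  refine h.congr_fun (fun x hx => ?_) measurableSet_Ioi
  dsimp only
  rw [Real.rpow_one, mul_comm]

noncomputable def F (α : ℝ) (l : ℂ) : ℂ :=
  ∫ x in Ioi (0:ℝ), (Complex.exp (l * x) - 1) * ((x ^ (-(α + 1)) : ℝ) : ℂ)

lemma hasDerivAt_F {α : ℝ} (hα₀ : 0 < α) (hα₁ : α < 1) {l : ℂ} (hl : l.re < 0) :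
    HasDerivAt (F α) (∫ x in Ioi (0:ℝ), Complex.exp (l * x) * ((x ^ (-α) : ℝ) : ℂ)) l := by
  set ε := -l.re / 2 with hε
  have hε0 : 0 < ε := by simp only [hε]; linarith
  have key := hasDerivAt_integral_of_dominated_loc_of_deriv_le (μ := volume.restrict (Ioi 0))
    (x₀ := l)
    (F := fun l (x : ℝ) => (Complex.exp (l * x) - 1) * ((x ^ (-(α + 1)) : ℝ) : ℂ))
    (F' := fun l (x : ℝ) => (Complex.exp (l * x) * x) * ((x ^ (-(α + 1)) : ℝ) : ℂ))
    (bound := fun x => Real.exp (-ε * x) * x ^ (-α)) (Metric.ball_mem_nhds l hε0)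
    (Eventually.of_forall (fun l' => aesm_kernel α l'))
    (integrableOn_kernel hα₀ hα₁ l hl.le)
    (aesm_kernel' α l)
    ?_ (integrableOn_exp_rpow hα₁ hε0) ?_
  · have h2 := key.2
    have : (∫ x in Ioi (0:ℝ), (Complex.exp (l * x) * x) * ((x ^ (-(α + 1)) : ℝ) : ℂ))
        = ∫ x in Ioi (0:ℝ), Complex.exp (l * x) * ((x ^ (-α) : ℝ) : ℂ) := by
      refine setIntegral_congr_fun measurableSet_Ioi (fun x hx => ?_)
      have hx0 : (0:ℝ) < x := hx
      rw [mul_assoc]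
      congr 1
      rw [← Complex.ofReal_mul]
      congr 1
      rw [← Real.rpow_one_add' hx0.le (by intro h; linarith : (1 + -(α+1)) ≠ 0)]
      norm_num
    rwa [this] at h2
  · -- bound
    filter_upwards [ae_restrict_mem measurableSet_Ioi] with x hx l' hl'
    have hx0 : (0:ℝ) < x := hx
    have hre : l'.re ≤ -ε := by
      have h1 : |l'.re - l.re| ≤ ‖l' - l‖ := by
        rw [← Complex.sub_re]; exact Complex.abs_re_le_norm _
      rw [Metric.mem_ball, Complex.dist_eq] at hl'
      have := (abs_le.1 h1).2
      simp only [hε] at *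
      linarith [this.trans hl'.le]
    simp only [norm_mul, Complex.norm_real, Real.norm_eq_abs,
      Complex.norm_exp, _root_.abs_of_nonneg hx0.le,
      _root_.abs_of_nonneg (Real.rpow_nonneg hx0.le (-(α+1)))]
    have h1 : (l' * x).re = l'.re * x := by
      simp [Complex.mul_re]
    rw [h1, mul_assoc]
    have h2 : x * x ^ (-(α+1)) = x ^ (-α) := by
      rw [← Real.rpow_one_add' hx0.le (by intro h; linarith : (1 + -(α+1)) ≠ 0)]
      norm_num
    rw [h2]
    apply mul_le_mul_of_nonneg_right _ (Real.rpow_nonneg hx0.le _)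
    exact Real.exp_le_exp.2 (by nlinarith)
  · -- differentiability
    filter_upwards [ae_restrict_mem measurableSet_Ioi] with x hx l' _
    exact (((hasDerivAt_mul_const (x:ℂ)).cexp).sub_const 1).mul_const _




lemma deriv_integral_real {α : ℝ} (hα₀ : 0 < α) (hα₁ : α < 1) {r : ℝ} (hr : 0 < r) :
    (∫ x in Ioi (0:ℝ), Complex.exp (-(r:ℂ) * x) * ((x ^ (-α) : ℝ) : ℂ))
      = ((r ^ (α - 1) : ℝ) : ℂ) * ((Real.Gamma (1 - α) : ℝ) : ℂ) := by
  have h := Complex.integral_cpow_mul_exp_neg_mul_Ioi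
    (a := ((1 - α : ℝ) : ℂ)) (r := r) (by simp [hα₁]) hr
  rw [show ((1-α:ℝ):ℂ) - 1 = ((-α : ℝ) : ℂ) by push_cast; ring] at h
  rw [show (∫ x in Ioi (0:ℝ), Complex.exp (-(r:ℂ) * x) * ((x ^ (-α) : ℝ) : ℂ))
      = ∫ x in Ioi (0:ℝ), (x:ℂ) ^ ((-α : ℝ):ℂ) * Complex.exp (-(↑r * ↑x)) from ?_, h]
  · rw [show ((r ^ (α - 1) : ℝ) : ℂ) = (1/(r:ℂ)) ^ ((1-α:ℝ):ℂ) from ?_,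
      Complex.Gamma_ofReal]
    rw [show (1/(r:ℂ)) = (((1/r : ℝ)):ℂ) by push_cast; ring]
    rw [← Complex.ofReal_cpow (by positivity) _]
    norm_cast
    rw [one_div, Real.inv_rpow hr.le, ← Real.rpow_neg hr.le]
    norm_num
  · refine setIntegral_congr_fun measurableSet_Ioi (fun x hx => ?_)
    have hx0 : (0:ℝ) < x := hx
    rw [← Complex.ofReal_cpow hx0.le, mul_comm]
    congr 2
    push_cast
    ring


lemma hasDerivAt_phi {α : ℝ} (hα₀ : 0 < α) (hα₁ : α < 1) {r : ℝ} (hr : 0 < r) :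
    HasDerivAt (fun r : ℝ => F α (-(r:ℂ)) + ((Real.Gamma (1-α) / α : ℝ) : ℂ) * ((r ^ α : ℝ) : ℂ))
      0 r := by
  have h1 : HasDerivAt (fun r : ℝ => F α (-(r:ℂ)))
      (-(((r ^ (α-1) : ℝ):ℂ) * ((Real.Gamma (1-α) : ℝ) : ℂ))) r := by
    have hd : HasDerivAt (fun w : ℂ => F α (-w))
        ((∫ x in Ioi (0:ℝ), Complex.exp (-(r:ℂ) * x) * ((x ^ (-α) : ℝ) : ℂ)) * (-1)) (r:ℂ) := by
      exact (hasDerivAt_F hα₀ hα₁ (l := -(r:ℂ)) (by simpa using hr)).comp (r:ℂ)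
        (hasDerivAt_neg (r:ℂ))
    rw [deriv_integral_real hα₀ hα₁ hr] at hd
    have := hd.comp_ofReal
    convert this using 1
    ring
  have h2 : HasDerivAt (fun r : ℝ => ((Real.Gamma (1-α) / α : ℝ) : ℂ) * ((r ^ α : ℝ) : ℂ))
      (((Real.Gamma (1-α) / α : ℝ) : ℂ) * ((α * r ^ (α-1) : ℝ) : ℂ)) r :=
    ((Real.hasDerivAt_rpow_const (p := α) (Or.inl hr.ne')).ofReal_comp).const_mul _
  have h3 := h1.add h2
  convert h3 using 1
  have hα : (α:ℂ) ≠ 0 := by exact_mod_cast hα₀.ne'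
  · rfl
  · rfl
  · have hα : (α:ℂ) ≠ 0 := by exact_mod_cast hα₀.ne'
    push_cast
    linear_combination (-(((r ^ (α - 1) : ℝ) : ℂ) * ((Real.Gamma (1-α) : ℝ) : ℂ))) * mul_inv_cancel₀ hα

lemma F_real {α : ℝ} (hα₀ : 0 < α) (hα₁ : α < 1) {r : ℝ} (hr : 0 < r) :
    F α (-(r:ℂ)) = -(((Real.Gamma (1-α) / α : ℝ) : ℂ) * ((r ^ α : ℝ) : ℂ)) := by
  set φ : ℝ → ℂ := fun r => F α (-(r:ℂ)) + ((Real.Gamma (1-α) / α : ℝ) : ℂ) * ((r ^ α : ℝ) : ℂ)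
    with hφ
  have hconst : ∀ a ∈ Ioi (0:ℝ), ∀ b ∈ Ioi (0:ℝ), φ a = φ b := by
    intro a ha b hb
    refine (convex_Ioi (0:ℝ)).is_const_of_fderivWithin_eq_zero (𝕜 := ℝ)
      (fun x hx => ((hasDerivAt_phi hα₀ hα₁ hx).differentiableAt).differentiableWithinAt)
      (fun x hx => ?_) ha hb
    have hu : UniqueDiffWithinAt ℝ (Ioi (0:ℝ)) x := isOpen_Ioi.uniqueDiffWithinAt hx
    rw [(((hasDerivAt_phi hα₀ hα₁ hx).hasFDerivAt).hasFDerivWithinAt).fderivWithin hu]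
    ext y
    simp
  -- limit of φ at 0⁺ is 0
  have hlim1 : Tendsto (fun r : ℝ => F α (-(r:ℂ))) (nhdsWithin 0 (Ioi 0)) (nhds 0) := by
    have h := tendsto_integral_filter_of_dominated_convergence
      (μ := volume.restrict (Ioi (0:ℝ))) (l := nhdsWithin (0:ℝ) (Ioi 0))
      (F := fun (r : ℝ) (x : ℝ) => (Complex.exp (-(r:ℂ) * x) - 1) * ((x ^ (-(α + 1)) : ℝ) : ℂ))
      (f := fun _ : ℝ => (0:ℂ))
      (bound := fun x => min 2 (2 * x) * x ^ (-(α+1)))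
      (Eventually.of_forall (fun r => aesm_kernel α _))
      ?_ (integrableOn_min_dom hα₀ hα₁ (by norm_num)) ?_
    · rw [show (0:ℂ) = ∫ (_ : ℝ) in Ioi (0:ℝ), (0:ℂ) from (integral_zero _ _).symm]
      exact h
    · filter_upwards [Ioc_mem_nhdsGT_of_mem (⟨le_refl (0:ℝ), zero_lt_one⟩ : (0:ℝ) ∈ Ico (0:ℝ) 1)] with r hr
      filter_upwards [ae_restrict_mem measurableSet_Ioi] with x hx
      have hx0 : (0:ℝ) < x := hx
      rw [norm_mul, Complex.norm_real, Real.norm_eq_abs,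
        _root_.abs_of_nonneg (Real.rpow_nonneg hx0.le _)]
      apply mul_le_mul_of_nonneg_right _ (Real.rpow_nonneg hx0.le _)
      have hre : ((-(r:ℂ)) * x).re ≤ 0 := by
        simp only [Complex.mul_re, Complex.neg_re, Complex.ofReal_re, Complex.neg_im,
          Complex.ofReal_im, mul_zero, sub_zero, neg_zero]
        nlinarith [hr.1, hx0]
      refine (norm_cexp_sub_one_le hre).trans ?_
      apply min_le_min (le_refl 2)
      simp only [norm_mul, norm_neg, Complex.norm_real, Real.norm_eq_abs,
        _root_.abs_of_nonneg hr.1.le, _root_.abs_of_nonneg hx0.le]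
      nlinarith [hr.1, hr.2, hx0]
    · filter_upwards [ae_restrict_mem measurableSet_Ioi] with x hx
      have : Tendsto (fun r : ℝ => (Complex.exp (-(r:ℂ) * x) - 1) * ((x ^ (-(α + 1)) : ℝ) : ℂ))
          (nhds 0) (nhds ((Complex.exp (-(0:ℝ) * x) - 1) * ((x ^ (-(α + 1)) : ℝ) : ℂ))) := by
        apply Continuous.tendsto
        exact ((Complex.continuous_exp.comp ((continuous_ofReal.neg).mul
          continuous_const)).sub continuous_const).mul continuous_const
      simp only [Complex.ofReal_zero, neg_zero, zero_mul, Complex.exp_zero, sub_self,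
        zero_mul] at this
      exact this.mono_left nhdsWithin_le_nhds
  have hlim2 : Tendsto φ (nhdsWithin 0 (Ioi 0)) (nhds 0) := by
    have h2 : Tendsto (fun r : ℝ => ((Real.Gamma (1-α) / α : ℝ) : ℂ) * ((r ^ α : ℝ) : ℂ))
        (nhdsWithin 0 (Ioi 0)) (nhds 0) := by
      have : Tendsto (fun r : ℝ => (r ^ α : ℝ)) (nhds 0) (nhds 0) := by
        have := (Real.continuousAt_rpow_const 0 α (Or.inr hα₀.le))
        simpa [Real.zero_rpow hα₀.ne'] using this.tendsto
      have := (Complex.continuous_ofReal.tendsto 0).comp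
        (this.mono_left (nhdsWithin_le_nhds (s := Ioi (0:ℝ))))
      simpa using this.const_mul (((Real.Gamma (1-α) / α : ℝ) : ℂ))
    have h := hlim1.add h2
    rw [add_zero] at h
    exact h
  have hlimc : Tendsto φ (nhdsWithin 0 (Ioi 0)) (nhds (φ 1)) := by
    apply Tendsto.congr' _ tendsto_const_nhds
    filter_upwards [self_mem_nhdsWithin] with r hr
    exact (hconst 1 (mem_Ioi.2 zero_lt_one) r hr)
  have h0 : φ 1 = 0 := tendsto_nhds_unique hlimc hlim2
  have := hconst r hr 1 (mem_Ioi.2 zero_lt_one)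
  rw [h0] at this
  rw [hφ] at this
  simp only at this
  linear_combination this




lemma F_halfplane {α : ℝ} (hα₀ : 0 < α) (hα₁ : α < 1) {l : ℂ} (hl : l.re < 0) :
    F α l = -(((Real.Gamma (1-α) / α : ℝ) : ℂ) * (-l) ^ (α : ℂ)) := by
  set U : Set ℂ := {z : ℂ | z.re < 0} with hU
  have hUo : IsOpen U := isOpen_Iio.preimage Complex.continuous_re
  have hg_diff : ∀ z ∈ U, DifferentiableAt ℂ
      (fun z : ℂ => -(((Real.Gamma (1-α) / α : ℝ) : ℂ) * (-z) ^ (α : ℂ))) z := by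
    intro z hz
    have h0 : -z ∈ Complex.slitPlane := Or.inl (by rw [hU] at hz; simpa using hz)
    exact (((differentiable_neg z).cpow (differentiableAt_const _) h0).const_mul _).neg
  have hf : AnalyticOnNhd ℂ (F α) U :=
    DifferentiableOn.analyticOnNhd
      (fun z hz => (hasDerivAt_F hα₀ hα₁ hz).differentiableAt.differentiableWithinAt) hUo
  have hg : AnalyticOnNhd ℂ (fun z : ℂ => -(((Real.Gamma (1-α) / α : ℝ) : ℂ) * (-z) ^ (α : ℂ))) U :=
    DifferentiableOn.analyticOnNhd (fun z hz => (hg_diff z hz).differentiableWithinAt) hUo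
  have hm1 : (-1 : ℂ) ∈ U := by simp [hU]
  have hfreq : ∃ᶠ z in nhdsWithin (-1 : ℂ) {(-1:ℂ)}ᶜ,
      F α z = -(((Real.Gamma (1-α) / α : ℝ) : ℂ) * (-z) ^ (α : ℂ)) := by
    have htend : Tendsto (fun n : ℕ => -((1 + 1/(n+1) : ℝ) : ℂ)) atTop
        (nhdsWithin (-1 : ℂ) {(-1:ℂ)}ᶜ) := by
      apply tendsto_nhdsWithin_of_tendsto_nhds_of_eventually_within
      · have h1 : Tendsto (fun n : ℕ => (1 + 1/(n+1) : ℝ)) atTop (nhds 1) := by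
          have : Tendsto (fun n : ℕ => 1 / ((n : ℝ) + 1)) atTop (nhds 0) :=
            tendsto_one_div_add_atTop_nhds_zero_nat
          simpa using (tendsto_const_nhds (x := (1:ℝ))).add this
        have := (Complex.continuous_ofReal.tendsto 1).comp h1
        simpa using this.neg
      · apply Eventually.of_forall
        intro n
        simp only [mem_compl_iff, mem_singleton_iff, neg_inj]
        intro h
        have : (1 + 1/(n+1 : ℝ) : ℝ) = 1 := by exact_mod_cast congrArg Complex.re h
        have hpos : 0 < 1/(n+1 : ℝ) := by positivity
        linarith
    apply htend.frequently
    apply Frequently.of_forall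
    intro n
    have hrpos : (0:ℝ) < 1 + 1/(n+1 : ℝ) := by positivity
    rw [F_real hα₀ hα₁ hrpos, neg_neg, Complex.ofReal_cpow hrpos.le]
  have := AnalyticOnNhd.eqOn_of_preconnected_of_frequently_eq hf hg
    ((convex_halfSpace_re_lt 0).isPreconnected) hm1 hfreq
  exact this hl

lemma F_boundary {α : ℝ} (hα₀ : 0 < α) (hα₁ : α < 1) {t : ℝ} (ht : 0 < t) :
    F α (Complex.I * t) = -(((Real.Gamma (1-α) / α : ℝ) : ℂ)
      * (((t ^ α : ℝ) : ℂ) * Complex.exp (-(Real.pi : ℂ) * Complex.I / 2 * α))) := by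
  have hcpow : (-(Complex.I * (t:ℂ))) ^ (α : ℂ)
      = ((t ^ α : ℝ) : ℂ) * Complex.exp (-(Real.pi : ℂ) * Complex.I / 2 * α) := by
    have hne : (-(Complex.I * (t:ℂ))) ≠ 0 := by
      simp only [ne_eq, neg_eq_zero, mul_eq_zero, Complex.I_ne_zero, Complex.ofReal_eq_zero,
        false_or]
      exact ht.ne'
    have hrw : (-(Complex.I * (t:ℂ))) = (t:ℂ) * (-Complex.I) := by ring
    have harg : Complex.arg (-(Complex.I * (t:ℂ))) = -(Real.pi/2) := by
      rw [hrw, Complex.arg_real_mul _ ht, Complex.arg_neg_I]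
    have habs : ‖(-(Complex.I * (t:ℂ)))‖ = t := by
      rw [hrw]
      simp [_root_.abs_of_nonneg ht.le]
    rw [Complex.cpow_def_of_ne_zero hne, Complex.log, habs, harg]
    rw [add_mul, Complex.exp_add]
    congr 1
    · rw [show ((Real.log t : ℝ) : ℂ) * (α:ℂ) = ((Real.log t * α : ℝ) : ℂ) by push_cast; ring,
        ← Complex.ofReal_exp]
      rw [Real.rpow_def_of_pos ht]
    · congr 1
      push_cast
      ring
  rw [← hcpow]
  have hlim1 : Tendsto (fun ε : ℝ => F α (-(ε:ℂ) + Complex.I * t)) (nhdsWithin 0 (Ioi 0))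
      (nhds (F α (Complex.I * t))) := by
    have h := tendsto_integral_filter_of_dominated_convergence
      (μ := volume.restrict (Ioi (0:ℝ))) (l := nhdsWithin (0:ℝ) (Ioi 0))
      (F := fun (ε : ℝ) (x : ℝ) =>
        (Complex.exp ((-(ε:ℂ) + Complex.I * t) * x) - 1) * ((x ^ (-(α + 1)) : ℝ) : ℂ))
      (f := fun x : ℝ => (Complex.exp ((Complex.I * t) * x) - 1) * ((x ^ (-(α + 1)) : ℝ) : ℂ))
      (bound := fun x => min 2 (2 * (1 + t) * x) * x ^ (-(α+1)))
      (Eventually.of_forall (fun ε => aesm_kernel α _))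
      ?_ (integrableOn_min_dom hα₀ hα₁ (by positivity)) ?_
    · exact h
    · filter_upwards [Ioc_mem_nhdsGT_of_mem (⟨le_refl (0:ℝ), zero_lt_one⟩ : (0:ℝ) ∈ Ico (0:ℝ) 1)]
        with ε hε
      filter_upwards [ae_restrict_mem measurableSet_Ioi] with x hx
      have hx0 : (0:ℝ) < x := hx
      rw [norm_mul, Complex.norm_real, Real.norm_eq_abs,
        _root_.abs_of_nonneg (Real.rpow_nonneg hx0.le _)]
      apply mul_le_mul_of_nonneg_right _ (Real.rpow_nonneg hx0.le _)
      have hre : ((-(ε:ℂ) + Complex.I * t) * x).re ≤ 0 := by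
        simp only [Complex.add_re, Complex.mul_re, Complex.neg_re, Complex.ofReal_re,
          Complex.I_re, Complex.ofReal_im, Complex.I_im, Complex.neg_im, Complex.add_im,
          Complex.mul_im]
        ring_nf
        nlinarith [hε.1, hx0]
      refine (norm_cexp_sub_one_le hre).trans ?_
      apply min_le_min (le_refl 2)
      rw [norm_mul, Complex.norm_real, Real.norm_eq_abs, _root_.abs_of_nonneg hx0.le]
      have hnorm : ‖-(ε:ℂ) + Complex.I * t‖ ≤ 1 + t := by
        calc ‖-(ε:ℂ) + Complex.I * t‖ ≤ ‖-(ε:ℂ)‖ + ‖Complex.I * (t:ℂ)‖ := norm_add_le _ _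
        _ = ε + t := by
            rw [norm_neg, Complex.norm_real, Real.norm_eq_abs, _root_.abs_of_nonneg hε.1.le,
              norm_mul, Complex.norm_I, Complex.norm_real, Real.norm_eq_abs, _root_.abs_of_nonneg ht.le, one_mul]
        _ ≤ 1 + t := by linarith [hε.2]
      nlinarith [hx0]
    · filter_upwards [ae_restrict_mem measurableSet_Ioi] with x hx
      have : Tendsto (fun ε : ℝ =>
          (Complex.exp ((-(ε:ℂ) + Complex.I * t) * x) - 1) * ((x ^ (-(α + 1)) : ℝ) : ℂ))
          (nhds 0) (nhds ((Complex.exp ((-((0:ℝ):ℂ) + Complex.I * t) * x) - 1)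
            * ((x ^ (-(α + 1)) : ℝ) : ℂ))) := by
        apply Continuous.tendsto
        exact ((Complex.continuous_exp.comp (((Complex.continuous_ofReal.neg).add
          continuous_const).mul continuous_const)).sub continuous_const).mul continuous_const
      simp only [Complex.ofReal_zero, neg_zero, zero_add] at this
      exact this.mono_left nhdsWithin_le_nhds
  have hlim2 : Tendsto (fun ε : ℝ => F α (-(ε:ℂ) + Complex.I * t)) (nhdsWithin 0 (Ioi 0))
      (nhds (-(((Real.Gamma (1-α) / α : ℝ) : ℂ) * (-(Complex.I * (t:ℂ))) ^ (α : ℂ)))) := by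
    have hcont : ContinuousAt (fun z : ℂ => -(((Real.Gamma (1-α) / α : ℝ) : ℂ)
        * (-z) ^ (α : ℂ))) (Complex.I * t) := by
      have h0 : -(Complex.I * (t:ℂ)) ∈ Complex.slitPlane := by
        right
        simp [ht.ne']
      exact ((((continuousAt_cpow_const h0).comp
        (continuous_neg.continuousAt)).const_mul _).neg)
    have hz : Tendsto (fun ε : ℝ => -(ε:ℂ) + Complex.I * t) (nhdsWithin 0 (Ioi 0))
        (nhds (Complex.I * t)) := by
      have : Tendsto (fun ε : ℝ => -(ε:ℂ) + Complex.I * t) (nhds 0) (nhds (Complex.I * t)) := by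
        have := ((Complex.continuous_ofReal.neg).add
          (continuous_const (y := Complex.I * (t:ℂ)))).tendsto (0:ℝ)
        convert this using 2 <;> simp
      exact this.mono_left nhdsWithin_le_nhds
    have := hcont.tendsto.comp hz
    apply this.congr'
    filter_upwards [self_mem_nhdsWithin] with ε hε
    have hre : (-(ε:ℂ) + Complex.I * t).re < 0 := by
      simp only [Complex.add_re, Complex.neg_re, Complex.ofReal_re, Complex.mul_re,
        Complex.I_re, Complex.ofReal_im, Complex.I_im, Complex.ofReal_re]
      simp only [zero_mul, one_mul, mul_zero]
      simpa using hε
    rw [Function.comp_apply, ← F_halfplane hα₀ hα₁ hre]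
  exact tendsto_nhds_unique hlim1 hlim2


end LevyAux

open LevyAux in
/-- for `0 < α < 1` and `t > 0`,
`∫₀^∞ (e^{itx} − 1 − itx/(1+x²)) x^{−(α+1)} dx = i c t − t^α e^{−iπα/2} Γ(1−α)/α`
for some real constant `c` depending only on `α`. -/
theorem integral_levy_kernel_alpha_lt_one (α : ℝ) (hα₀ : 0 < α) (hα₁ : α < 1) :
    ∃ c : ℝ, ∀ t : ℝ, 0 < t →
      (∫ x in Ioi (0 : ℝ),
          (Complex.exp (Complex.I * t * x) - 1 - Complex.I * t * x / (1 + (x : ℂ) ^ 2))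
            * ((x ^ (-(α + 1)) : ℝ) : ℂ))
        = Complex.I * c * t
            - ((t ^ α : ℝ) : ℂ) * Complex.exp (-(Real.pi : ℂ) * Complex.I / 2 * α)
              * (Real.Gamma (1 - α)) / α := by
  have hint2 : IntegrableOn (fun x : ℝ => x / (1 + x ^ 2) * x ^ (-(α + 1))) (Ioi (0:ℝ)) := by
    apply Integrable.mono' (integrableOn_min_dom hα₀ hα₁ (zero_le_one))
    · apply ContinuousOn.aestronglyMeasurable _ measurableSet_Ioi
      apply ContinuousOn.mul
      · exact (continuous_id.div (continuous_const.add (continuous_pow 2))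
          (fun x => (by positivity : (0:ℝ) < 1 + x ^ 2).ne')).continuousOn
      · intro x hx
        exact (Real.continuousAt_rpow_const x _ (Or.inl (ne_of_gt hx))).continuousWithinAt
    · filter_upwards [ae_restrict_mem measurableSet_Ioi] with x hx
      have hx0 : (0:ℝ) < x := hx
      have hd : (0:ℝ) < 1 + x ^ 2 := by positivity
      rw [Real.norm_eq_abs, abs_mul, _root_.abs_of_nonneg (Real.rpow_nonneg hx0.le _)]
      apply mul_le_mul_of_nonneg_right _ (Real.rpow_nonneg hx0.le _)
      rw [_root_.abs_of_nonneg (by positivity : (0:ℝ) ≤ x / (1 + x ^ 2))]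
      rcases le_total 2 (1 * x) with h | h
      · rw [min_eq_left h]
        rw [div_le_iff₀ hd]
        nlinarith
      · rw [min_eq_right h]
        rw [div_le_iff₀ hd, one_mul]
        nlinarith
  set K : ℝ := ∫ x in Ioi (0:ℝ), x / (1 + x ^ 2) * x ^ (-(α + 1)) with hK
  refine ⟨-K, fun t ht => ?_⟩
  have hint1 : IntegrableOn (fun x : ℝ =>
      (Complex.exp ((Complex.I * t) * x) - 1) * ((x ^ (-(α + 1)) : ℝ) : ℂ)) (Ioi (0:ℝ)) :=
    integrableOn_kernel hα₀ hα₁ _ (by simp)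
  have hint2c : IntegrableOn (fun x : ℝ =>
      Complex.I * (t:ℂ) * ((x / (1 + x ^ 2) * x ^ (-(α + 1)) : ℝ) : ℂ)) (Ioi (0:ℝ)) :=
    (hint2.ofReal (𝕜 := ℂ)).const_mul _
  have hsplit : ∫ x in Ioi (0 : ℝ),
      (Complex.exp (Complex.I * t * x) - 1 - Complex.I * t * x / (1 + (x : ℂ) ^ 2))
        * ((x ^ (-(α + 1)) : ℝ) : ℂ)
      = ∫ x in Ioi (0 : ℝ),
        ((Complex.exp ((Complex.I * t) * x) - 1) * ((x ^ (-(α + 1)) : ℝ) : ℂ)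
          - Complex.I * (t:ℂ) * ((x / (1 + x ^ 2) * x ^ (-(α + 1)) : ℝ) : ℂ)) := by
    refine setIntegral_congr_fun measurableSet_Ioi (fun x hx => ?_)
    have hx0 : (0:ℝ) < x := hx
    have hd : ((1:ℂ) + (x:ℂ) ^ 2) ≠ 0 := by
      intro h
      have := congrArg Complex.re h
      simp only [Complex.add_re, Complex.one_re, Complex.zero_re] at this
      have hx2 : ((x:ℂ) ^ 2).re = x ^ 2 := by
        simp [pow_two, Complex.mul_re]
      rw [hx2] at this
      nlinarith
    push_cast
    field_simp
  have hcoe : (∫ x in Ioi (0:ℝ), ((x / (1 + x ^ 2) * x ^ (-(α + 1)) : ℝ) : ℂ)) = (K : ℂ) := by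
    rw [hK]
    exact integral_ofReal (𝕜 := ℂ)
  rw [hsplit, integral_sub hint1 hint2c, integral_const_mul, hcoe]
  have hF : (∫ x in Ioi (0:ℝ),
      (Complex.exp ((Complex.I * t) * x) - 1) * ((x ^ (-(α + 1)) : ℝ) : ℂ))
      = F α (Complex.I * t) := rfl
  rw [hF, F_boundary hα₀ hα₁ ht]
  push_cast
  ring
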